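/- In SL₃(ℂ), the map x_η : ℂ → SL₃(ℂ) defined by x_η(a) = x₁(a)·x₂(2a)·x₁(a), where x₁(a) = I + aE₁₂ and x₂(a) = I + aE₂₃, is a group homomorphism from the additive group ℂ, i.e. x_η(a+b) = x_η(a)·x_η(b) for all a, b ∈ ℂ. -/

import Mathlib

/- STATEMENT 1: In SL₃(ℂ), the map x_η(a) = x₁(a)·x₂(2a)·x₁(a), where
x₁(a) = I + aE₁₂ and x₂(a) = I + aE₂₃, is a homomorphism from the additive group ℂ:
x_η(a+b) = x_η(a)·x_η(b). -/

/-- `x₁(a) = I + a·E₁₂`. -/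
noncomputable def x₁ (a : ℂ) : Matrix (Fin 3) (Fin 3) ℂ :=
  1 + a • Matrix.single 0 1 1

/-- `x₂(a) = I + a·E₂₃`. -/
noncomputable def x₂ (a : ℂ) : Matrix (Fin 3) (Fin 3) ℂ :=
  1 + a • Matrix.single 1 2 1

/-- `x_η(a) = x₁(a)·x₂(2a)·x₁(a)`. -/
noncomputable def xη (a : ℂ) : Matrix (Fin 3) (Fin 3) ℂ :=
  x₁ a * x₂ (2 * a) * x₁ a

theorem stmt1 (a b : ℂ) : xη (a + b) = xη a * xη b := by
  ext i j
  fin_cases i <;> fin_cases j <;>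
    simp [xη, x₁, x₂, Matrix.mul_apply, Fin.sum_univ_succ, Matrix.single,
      Matrix.one_apply] <;> ring
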